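/- Let e ≥ 1 and let a_0, w_1, …, w_e be rational numbers with w_e a nonzero integer. Then the number of integers t with |a_0 + w_1 t + … + w_e t^e| ≤ B^e is at most 2eB/|w_e|^{1/e} + e. -/

import Mathlib

lemma aux_le (c : ℝ) (hc : 0 < c) : ∀ s : Multiset ℝ, (∀ x ∈ s, c ≤ x) →
    c ^ Multiset.card s ≤ s.prod := by
  intro s
  induction s using Multiset.induction with
  | empty => simp
  | cons a s ih =>
    intro h
    rw [Multiset.card_cons, Multiset.prod_cons, pow_succ']
    exact mul_le_mul (h a (Multiset.mem_cons_self a s))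
      (ih fun x hx => h x (Multiset.mem_cons_of_mem hx))
      (pow_nonneg hc.le _) (hc.le.trans (h a (Multiset.mem_cons_self a s)))

lemma aux_lt (c : ℝ) (hc : 0 < c) (s : Multiset ℝ) (hs : s ≠ 0)
    (h : ∀ x ∈ s, c < x) : c ^ Multiset.card s < s.prod := by
  obtain ⟨a, ha⟩ := Multiset.exists_mem_of_ne_zero hs
  rw [← Multiset.cons_erase ha, Multiset.card_cons, Multiset.prod_cons, pow_succ']
  exact mul_lt_mul (h a ha)
    (aux_le c hc _ fun x hx => (h x (Multiset.mem_of_mem_erase hx)).le)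
    (pow_pos hc _) ((hc.trans (h a ha)).le)

/-- **Counting integers where a degree-`e` polynomial is small**. Let `e ≥ 1`,
let `p = a_0 + w_1 t + … + w_e t^e ∈ ℚ[t]` with leading coefficient `w_e` a nonzero
integer. Then the number of integers `t` with `|p(t)| ≤ B^e` is at most
`2eB/|w_e|^{1/e} + e`. -/
theorem stmt_3 (e : ℕ) (he : 1 ≤ e) (p : Polynomial ℚ) (we : ℤ) (hwe : we ≠ 0)
    (hdeg : p.natDegree ≤ e) (hlead : p.coeff e = (we : ℚ))
    (B : ℝ) (hB : 1 ≤ B) :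
    (Nat.card {t : ℤ | |((p.eval (t : ℚ) : ℚ) : ℝ)| ≤ B ^ e} : ℝ)
      ≤ 2 * e * B / |(we : ℝ)| ^ ((1 : ℝ) / e) + e := by
  have hB0 : (0:ℝ) < B := lt_of_lt_of_le one_pos hB
  have hwe0 : (0:ℝ) < |(we:ℝ)| := abs_pos.mpr (by exact_mod_cast hwe)
  set X : ℝ := |(we:ℝ)| ^ ((1:ℝ)/e) with hXdef
  have hX0 : 0 < X := Real.rpow_pos_of_pos hwe0 _
  set r : ℝ := B / X with hrdef
  have hr0 : 0 < r := div_pos hB0 hX0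
  have hXe : X ^ e = |(we:ℝ)| := by
    rw [hXdef, ← Real.rpow_natCast (|(we:ℝ)| ^ ((1:ℝ)/e)) e, ← Real.rpow_mul hwe0.le]
    rw [one_div_mul_cancel (Nat.cast_ne_zero.mpr (by omega) : (e:ℝ) ≠ 0), Real.rpow_one]
  have hre : r ^ e * |(we:ℝ)| = B ^ e := by
    rw [hrdef, div_pow, hXe]
    field_simp
  -- basic facts about p
  have hp0 : p ≠ 0 := by
    intro h
    apply hwe
    have := hlead
    rw [h] at this
    simp at this
    exact_mod_cast this.symm
  have hpdeg : p.natDegree = e := by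
    refine le_antisymm hdeg (Polynomial.le_natDegree_of_ne_zero ?_)
    rw [hlead]
    exact_mod_cast hwe
  -- the complex polynomial
  set q : Polynomial ℂ := p.map (algebraMap ℚ ℂ) with hqdef
  have hq0 : q ≠ 0 := Polynomial.map_ne_zero hp0
  have hsplits : q.Splits := IsAlgClosed.splits _
  have hcard : Multiset.card q.roots = e := by
    rw [← hsplits.natDegree_eq_card_roots, hqdef, Polynomial.natDegree_map, hpdeg]
  have hqlead : q.leadingCoeff = (we : ℂ) := by
    rw [Polynomial.leadingCoeff, hqdef, Polynomial.natDegree_map, hpdeg,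
      Polynomial.coeff_map, hlead]
    simp
  have hfact : q = Polynomial.C (we : ℂ) * (q.roots.map fun a => Polynomial.X - Polynomial.C a).prod := by
    have := hsplits.eq_prod_roots
    rwa [hqlead] at this
  -- evaluation formula
  have heval : ∀ t : ℤ, ‖q.eval (t:ℂ)‖ = |((p.eval (t : ℚ) : ℚ) : ℝ)| := by
    intro t
    have h1 : q.eval (t:ℂ) = ((p.eval (t:ℚ) : ℚ) : ℂ) := by
      rw [hqdef, Polynomial.eval_map]
      have : ((t:ℤ):ℂ) = algebraMap ℚ ℂ ((t:ℤ):ℚ) := by norm_cast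
      rw [this, Polynomial.eval₂_at_apply]
      rfl
    rw [h1]
    rw [show ((p.eval (t:ℚ) : ℚ) : ℂ) = (((p.eval (t:ℚ) : ℚ) : ℝ) : ℂ) by norm_cast]
    rw [Complex.norm_real, Real.norm_eq_abs]
  -- key: small value forces closeness to a root
  have hkey : ∀ t : ℤ, |((p.eval (t : ℚ) : ℚ) : ℝ)| ≤ B ^ e →
      ∃ α ∈ q.roots, ‖(t:ℂ) - α‖ ≤ r := by
    intro t ht
    by_contra hcon
    push_neg at hcon
    have habs : ‖q.eval (t:ℂ)‖ =
        |(we:ℝ)| * (q.roots.map fun α => ‖(t:ℂ) - α‖).prod := by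
      conv_lhs => rw [hfact]
      rw [Polynomial.eval_mul, norm_mul, Polynomial.eval_C]
      congr 1
      · simp [Complex.norm_intCast]
      · rw [Polynomial.eval_multiset_prod, show ‖_‖ = _ from map_multiset_prod (normHom (α := ℂ)) _, Multiset.map_map,
          Multiset.map_map]
        congr 1
        apply Multiset.map_congr rfl
        intro α hα
        simp
    have hlt : r ^ e < (q.roots.map fun α => ‖(t:ℂ) - α‖).prod := by
      have hne : (q.roots.map fun α => ‖(t:ℂ) - α‖) ≠ 0 := by
        intro h
        have := congrArg Multiset.card h
        rw [Multiset.card_map, hcard] at this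
        simp at this
        omega
      have := aux_lt r hr0 _ hne (by
        intro x hx
        obtain ⟨α, hα, rfl⟩ := Multiset.mem_map.mp hx
        exact hcon α hα)
      rwa [Multiset.card_map, hcard] at this
    have : B ^ e < ‖q.eval (t:ℂ)‖ := by
      rw [habs, ← hre, mul_comm (r^e)]
      exact (mul_lt_mul_iff_right₀ hwe0).mpr hlt
    rw [heval t] at this
    exact absurd ht (not_le.mpr this)
  -- the covering finset
  set T : Finset ℤ := q.roots.toFinset.biUnion
    (fun α => Finset.Icc ⌈α.re - r⌉ ⌊α.re + r⌋) with hTdef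
  have hsub : {t : ℤ | |((p.eval (t : ℚ) : ℚ) : ℝ)| ≤ B ^ e} ⊆ (T : Set ℤ) := by
    intro t ht
    obtain ⟨α, hα, hle⟩ := hkey t ht
    simp only [hTdef, Finset.coe_biUnion, Multiset.mem_toFinset, Set.mem_iUnion,
      Finset.mem_coe, Finset.mem_Icc]
    refine ⟨α, hα, ?_, ?_⟩
    · rw [Int.ceil_le]
      have : |((t:ℝ) - α.re)| ≤ r := by
        have := (Complex.abs_re_le_norm ((t:ℂ) - α)).trans hle
        simpa using this
      linarith [abs_le.mp this]
    · rw [Int.le_floor]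
      have : |((t:ℝ) - α.re)| ≤ r := by
        have := (Complex.abs_re_le_norm ((t:ℂ) - α)).trans hle
        simpa using this
      linarith [abs_le.mp this]
  -- counting
  have hcount : (Nat.card {t : ℤ | |((p.eval (t : ℚ) : ℚ) : ℝ)| ≤ B ^ e} : ℝ)
      ≤ (T.card : ℝ) := by
    have h1 : Nat.card {t : ℤ | |((p.eval (t : ℚ) : ℚ) : ℝ)| ≤ B ^ e}
        = Set.ncard {t : ℤ | |((p.eval (t : ℚ) : ℚ) : ℝ)| ≤ B ^ e} := rfl
    rw [h1]
    have := Set.ncard_le_ncard hsub T.finite_toSet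
    rw [Set.ncard_coe_finset] at this
    exact_mod_cast this
  refine hcount.trans ?_
  have hbound : ∀ α : ℂ, ((Finset.Icc ⌈α.re - r⌉ ⌊α.re + r⌋).card : ℝ) ≤ 2*r + 1 := by
    intro α
    rw [Int.card_Icc]
    have h1 : ((⌊α.re + r⌋ + 1 - ⌈α.re - r⌉ : ℤ) : ℝ) ≤ 2*r + 1 := by
      push_cast
      have := Int.floor_le (α.re + r)
      have := Int.le_ceil (α.re - r)
      linarith
    rcases le_or_gt (⌊α.re + r⌋ + 1 - ⌈α.re - r⌉ : ℤ) 0 with h | h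
    · rw [Int.toNat_of_nonpos h]
      simp
      positivity
    · have h2 : (((⌊α.re + r⌋ + 1 - ⌈α.re - r⌉).toNat : ℕ) : ℝ)
          = ((⌊α.re + r⌋ + 1 - ⌈α.re - r⌉ : ℤ) : ℝ) := by
        exact_mod_cast Int.toNat_of_nonneg h.le
      rw [h2]
      exact h1
  have hT : (T.card : ℝ) ≤ (q.roots.toFinset.card : ℝ) * (2*r + 1) := by
    calc (T.card : ℝ) ≤ ((q.roots.toFinset.sum fun α => (Finset.Icc ⌈α.re - r⌉ ⌊α.re + r⌋).card : ℕ) : ℝ) := by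
          exact_mod_cast Finset.card_biUnion_le
      _ ≤ q.roots.toFinset.sum fun α => (2*r+1) := by
          push_cast
          exact Finset.sum_le_sum fun α _ => hbound α
      _ = (q.roots.toFinset.card : ℝ) * (2*r+1) := by
          rw [Finset.sum_const, nsmul_eq_mul]
  refine hT.trans ?_
  have hfcard : (q.roots.toFinset.card : ℝ) ≤ (e : ℝ) := by
    have := Multiset.toFinset_card_le q.roots
    rw [hcard] at this
    exact_mod_cast this
  have : (q.roots.toFinset.card : ℝ) * (2*r + 1) ≤ (e:ℝ) * (2*r+1) := by
    apply mul_le_mul_of_nonneg_right hfcard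
    positivity
  refine this.trans ?_
  rw [hrdef]
  rw [mul_add, mul_one]
  have : (e:ℝ) * (2 * (B / X)) = 2 * e * B / X := by ring
  rw [this]
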